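/- For any control sequence u(0),...,u(N), the Lagrangian cost satisfies J₁(u) = x'P(0)x + 2x'Φ(0,N)'λ − λ'G(0)λ + Σ_{k=0}^{N} (u(k) − K(k)x(k) − K₁(k)λ)' Γ(k) (u(k) − K(k)x(k) − K₁(k)λ); hence u*(k) = K(k)x(k) + K₁(k)λ is the unique minimizer of J₁ and the minimum equals x'P(0)x + 2x'Φ(0,N)'λ − λ'G(0)λ. -/

import Mathlib

open Matrix

/-- `transMat A N k` is the product `A(N) * A(N-1) * ⋯ * A(k)` for `k ≤ N`,
and the identity matrix for `k > N`. -/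
noncomputable def transMat {n : ℕ} (A : ℕ → Matrix (Fin n) (Fin n) ℝ) (N : ℕ) (k : ℕ) :
    Matrix (Fin n) (Fin n) ℝ :=
  if _ : k ≤ N then transMat A N (k + 1) * A k else 1
termination_by N + 1 - k
decreasing_by omega

/-- Trajectory of `x(k+1) = A(k)x(k) + B(k)u(k)` from `x(0) = x0` under the
open-loop control `u`. -/
noncomputable def traj {n m : ℕ} (A : ℕ → Matrix (Fin n) (Fin n) ℝ)
    (B : ℕ → Matrix (Fin n) (Fin m) ℝ) (x0 : Fin n → ℝ)
    (u : ℕ → Fin m → ℝ) : ℕ → Fin n → ℝ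
  | 0 => x0
  | k + 1 => A k *ᵥ traj A B x0 u k + B k *ᵥ u k

/-- Closed-loop trajectory under the feedback `u(k) = K(k)x(k) + c(k)`. -/
noncomputable def fbTraj {n m : ℕ} (A : ℕ → Matrix (Fin n) (Fin n) ℝ)
    (B : ℕ → Matrix (Fin n) (Fin m) ℝ) (K : ℕ → Matrix (Fin m) (Fin n) ℝ)
    (c : ℕ → Fin m → ℝ) (x0 : Fin n → ℝ) : ℕ → Fin n → ℝ
  | 0 => x0
  | k + 1 => A k *ᵥ fbTraj A B K c x0 k
      + B k *ᵥ (K k *ᵥ fbTraj A B K c x0 k + c k)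

lemma transMat_of_le {n : ℕ} (A : ℕ → Matrix (Fin n) (Fin n) ℝ) {N k : ℕ} (h : k ≤ N) :
    transMat A N k = transMat A N (k + 1) * A k := by
  rw [transMat]; simp [h]

lemma transMat_of_gt {n : ℕ} (A : ℕ → Matrix (Fin n) (Fin n) ℝ) {N k : ℕ} (h : N < k) :
    transMat A N k = 1 := by
  rw [transMat]; simp [Nat.not_le.mpr h]

lemma dotFlip {p q : ℕ} (M : Matrix (Fin p) (Fin q) ℝ) (v : Fin p → ℝ) (w : Fin q → ℝ) :
    v ⬝ᵥ M *ᵥ w = Mᵀ *ᵥ v ⬝ᵥ w := by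
  rw [Matrix.dotProduct_mulVec, ← Matrix.mulVec_transpose]

lemma mulVecDot {p q : ℕ} (M : Matrix (Fin p) (Fin q) ℝ) (v : Fin p → ℝ) (w : Fin q → ℝ) :
    M *ᵥ w ⬝ᵥ v = w ⬝ᵥ Mᵀ *ᵥ v := by
  rw [dotProduct_comm, dotFlip, dotProduct_comm]

lemma lq_step {n m : ℕ} (A P1 Qm Φ1 : Matrix (Fin n) (Fin n) ℝ)
    (B : Matrix (Fin n) (Fin m) ℝ) (R Γ W : Matrix (Fin m) (Fin m) ℝ)
    (hP1 : P1ᵀ = P1) (hW : Wᵀ = W)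
    (hΓ : Γ = R + Bᵀ * P1 * B) (hΓW : Γ * W = 1) (hWΓ : W * Γ = 1)
    (x : Fin n → ℝ) (u : Fin m → ℝ) (lam : Fin n → ℝ) :
    (A *ᵥ x + B *ᵥ u) ⬝ᵥ P1 *ᵥ (A *ᵥ x + B *ᵥ u)
      + 2 * (lam ⬝ᵥ Φ1 *ᵥ (A *ᵥ x + B *ᵥ u))
      + x ⬝ᵥ Qm *ᵥ x + u ⬝ᵥ R *ᵥ u
    = x ⬝ᵥ (Aᵀ * P1 * A + Qm - Aᵀ * P1 * B * W * (Bᵀ * P1 * A)) *ᵥ x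
      + 2 * (lam ⬝ᵥ (Φ1 * (A + B * (-(W * (Bᵀ * P1 * A))))) *ᵥ x)
      - lam ⬝ᵥ (Φ1 * (B * W * Bᵀ) * Φ1ᵀ) *ᵥ lam
      + (u - (-(W * (Bᵀ * P1 * A))) *ᵥ x - (-(W * (Bᵀ * Φ1ᵀ))) *ᵥ lam) ⬝ᵥ
          Γ *ᵥ (u - (-(W * (Bᵀ * P1 * A))) *ᵥ x - (-(W * (Bᵀ * Φ1ᵀ))) *ᵥ lam) := by
  have c2 : ∀ (z w : Fin m → ℝ), (W *ᵥ z) ⬝ᵥ Γ *ᵥ w = z ⬝ᵥ w := by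
    intro z w
    rw [mulVecDot, hW, Matrix.mulVec_mulVec, hWΓ, Matrix.one_mulVec]
  have c1 : ∀ (z : Fin m → ℝ), u ⬝ᵥ Γ *ᵥ (W *ᵥ z) = u ⬝ᵥ z := by
    intro z
    rw [Matrix.mulVec_mulVec, hΓW, Matrix.one_mulVec]
  set a := A *ᵥ x with ha
  set s := Bᵀ *ᵥ (P1 *ᵥ a) with hs
  set t := Bᵀ *ᵥ (Φ1ᵀ *ᵥ lam) with ht
  have hKx : (-(W * (Bᵀ * P1 * A))) *ᵥ x = -(W *ᵥ s) := by
    simp [hs, ha, Matrix.neg_mulVec, Matrix.mulVec_mulVec, Matrix.mul_assoc]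
  have hK1l : (-(W * (Bᵀ * Φ1ᵀ))) *ᵥ lam = -(W *ᵥ t) := by
    simp [ht, Matrix.neg_mulVec, Matrix.mulVec_mulVec, Matrix.mul_assoc]
  rw [hKx, hK1l]
  have hv : u - -(W *ᵥ s) - -(W *ᵥ t) = u + (W *ᵥ s + W *ᵥ t) := by abel
  rw [hv]
  have hsq : (u + (W *ᵥ s + W *ᵥ t)) ⬝ᵥ Γ *ᵥ (u + (W *ᵥ s + W *ᵥ t))
      = u ⬝ᵥ R *ᵥ u + (B *ᵥ u) ⬝ᵥ P1 *ᵥ (B *ᵥ u)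
        + 2 * (u ⬝ᵥ s) + 2 * (u ⬝ᵥ t)
        + s ⬝ᵥ W *ᵥ s + 2 * (s ⬝ᵥ W *ᵥ t) + t ⬝ᵥ W *ᵥ t := by
    have e1 : u ⬝ᵥ Γ *ᵥ u = u ⬝ᵥ R *ᵥ u + (B *ᵥ u) ⬝ᵥ P1 *ᵥ (B *ᵥ u) := by
      rw [hΓ, Matrix.add_mulVec, dotProduct_add]
      congr 1
      rw [← Matrix.mulVec_mulVec, ← Matrix.mulVec_mulVec, dotFlip, transpose_transpose]
    have e4 : t ⬝ᵥ W *ᵥ s = s ⬝ᵥ W *ᵥ t := by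
      rw [dotFlip, hW, dotProduct_comm]
    have e2 : s ⬝ᵥ u = u ⬝ᵥ s := dotProduct_comm _ _
    have e3 : t ⬝ᵥ u = u ⬝ᵥ t := dotProduct_comm _ _
    simp only [Matrix.mulVec_add, dotProduct_add, add_dotProduct, c1, c2, e1, e4, e2, e3]
    ring
  rw [hsq]
  have g1 : x ⬝ᵥ (Aᵀ * P1 * A + Qm - Aᵀ * P1 * B * W * (Bᵀ * P1 * A)) *ᵥ x
      = a ⬝ᵥ P1 *ᵥ a + x ⬝ᵥ Qm *ᵥ x - s ⬝ᵥ W *ᵥ s := by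
    rw [Matrix.sub_mulVec, Matrix.add_mulVec, dotProduct_sub, dotProduct_add]
    congr 1
    · congr 1
      rw [← Matrix.mulVec_mulVec, ← Matrix.mulVec_mulVec, dotFlip, transpose_transpose, ha]
    · rw [show Aᵀ * P1 * B * W * (Bᵀ * P1 * A) = Aᵀ * (P1 * (B * (W * (Bᵀ * (P1 * A))))) by
        simp [Matrix.mul_assoc]]
      simp only [← Matrix.mulVec_mulVec]
      rw [dotFlip, transpose_transpose, ← ha, dotFlip, hP1, dotFlip, ← hs]
  rw [g1]
  have e4 : t ⬝ᵥ W *ᵥ s = s ⬝ᵥ W *ᵥ t := by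
    rw [dotFlip, hW, dotProduct_comm]
  have f1 : B *ᵥ u ⬝ᵥ P1 *ᵥ a = u ⬝ᵥ s := by
    rw [mulVecDot, Matrix.mulVec_mulVec, ← Matrix.mulVec_mulVec, ← hs]
  have f2 : a ⬝ᵥ P1 *ᵥ (B *ᵥ u) = u ⬝ᵥ s := by
    rw [dotFlip, hP1, dotProduct_comm, ← f1]
  have f3 : lam ⬝ᵥ Φ1 *ᵥ (B *ᵥ u) = u ⬝ᵥ t := by
    rw [dotFlip, dotProduct_comm, mulVecDot, ← ht]
  have f4 : lam ⬝ᵥ Φ1 *ᵥ (B *ᵥ (W *ᵥ s)) = s ⬝ᵥ W *ᵥ t := by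
    rw [dotFlip, dotProduct_comm, mulVecDot, ← ht, dotProduct_comm, e4]
  have g3 : lam ⬝ᵥ (Φ1 * (A + B * -(W * (Bᵀ * P1 * A)))) *ᵥ x
      = lam ⬝ᵥ Φ1 *ᵥ a - s ⬝ᵥ W *ᵥ t := by
    rw [← Matrix.mulVec_mulVec, Matrix.add_mulVec, ← Matrix.mulVec_mulVec, hKx]
    simp only [Matrix.mulVec_neg, Matrix.mulVec_add, dotProduct_add, dotProduct_neg]
    rw [f4, ← ha]
    ring
  have g4 : lam ⬝ᵥ (Φ1 * (B * W * Bᵀ) * Φ1ᵀ) *ᵥ lam = t ⬝ᵥ W *ᵥ t := by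
    simp only [← Matrix.mulVec_mulVec]
    rw [dotFlip (M := Φ1), dotFlip (M := B), ← ht]
  rw [g3, g4]
  simp only [Matrix.mulVec_add, dotProduct_add, add_dotProduct, f1, f2, f3]
  ring

theorem cost_sum_of_squares {n m N : ℕ}
    (A : ℕ → Matrix (Fin n) (Fin n) ℝ) (B : ℕ → Matrix (Fin n) (Fin m) ℝ)
    (Q H : Matrix (Fin n) (Fin n) ℝ) (R : Matrix (Fin m) (Fin m) ℝ)
    (hQ : Q.PosSemidef) (hH : H.PosSemidef) (hR : R.PosDef)
    (P : ℕ → Matrix (Fin n) (Fin n) ℝ)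
    (hPterm : P (N + 1) = H)
    (hP : ∀ k ≤ N, P k
        = (A k)ᵀ * P (k + 1) * A k + Q
          - (A k)ᵀ * P (k + 1) * B k * (R + (B k)ᵀ * P (k + 1) * B k)⁻¹
              * ((B k)ᵀ * P (k + 1) * A k))
    (Γ : ℕ → Matrix (Fin m) (Fin m) ℝ)
    (hΓ : ∀ k ≤ N, Γ k = R + (B k)ᵀ * P (k + 1) * B k)
    (K : ℕ → Matrix (Fin m) (Fin n) ℝ)
    (hK : ∀ k ≤ N, K k = -((Γ k)⁻¹ * ((B k)ᵀ * P (k + 1) * A k)))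
    (Ac : ℕ → Matrix (Fin n) (Fin n) ℝ)
    (hAc : ∀ k ≤ N, Ac k = A k + B k * K k)
    (K₁ : ℕ → Matrix (Fin m) (Fin n) ℝ)
    (hK₁ : ∀ k ≤ N, K₁ k = -((Γ k)⁻¹ * ((B k)ᵀ * (transMat Ac N (k + 1))ᵀ)))
    (x0 lam : Fin n → ℝ)
    (J : (ℕ → Fin m → ℝ) → ℝ)
    (hJ : ∀ u, J u
        = ∑ k ∈ Finset.range (N + 1),
            (traj A B x0 u k ⬝ᵥ Q *ᵥ traj A B x0 u k + u k ⬝ᵥ R *ᵥ u k)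
          + traj A B x0 u (N + 1) ⬝ᵥ H *ᵥ traj A B x0 u (N + 1)
          + 2 * (lam ⬝ᵥ traj A B x0 u (N + 1)))
    (optval : ℝ)
    (hoptval : optval
        = x0 ⬝ᵥ P 0 *ᵥ x0 + 2 * (x0 ⬝ᵥ (transMat Ac N 0)ᵀ *ᵥ lam)
          - lam ⬝ᵥ (∑ j ∈ Finset.Icc 0 N,
              transMat Ac N (j + 1) * (B j * (Γ j)⁻¹ * (B j)ᵀ)
                * (transMat Ac N (j + 1))ᵀ) *ᵥ lam)
    (ustar : ℕ → Fin m → ℝ)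
    (hustar : ∀ k, ustar k
        = K k *ᵥ fbTraj A B K (fun j => K₁ j *ᵥ lam) x0 k + K₁ k *ᵥ lam) :
    (∀ u, J u = optval
        + ∑ k ∈ Finset.range (N + 1),
            (u k - K k *ᵥ traj A B x0 u k - K₁ k *ᵥ lam)
              ⬝ᵥ Γ k *ᵥ (u k - K k *ᵥ traj A B x0 u k - K₁ k *ᵥ lam))
      ∧ (∀ u, J ustar ≤ J u)
      ∧ (∀ u, J u = J ustar
          → ∀ k ≤ N, u k = K k *ᵥ traj A B x0 u k + K₁ k *ᵥ lam)
      ∧ J ustar = optval := by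
  have hQsym : Qᵀ = Q := by
    rw [← Matrix.conjTranspose_eq_transpose_of_trivial]; exact hQ.1
  have hRsym : Rᵀ = R := by
    rw [← Matrix.conjTranspose_eq_transpose_of_trivial]; exact hR.1
  -- positive semidefiniteness of P, by downward induction
  have Ppsd : ∀ d k, k + d = N + 1 → (P k).PosSemidef := by
    intro d
    induction d with
    | zero =>
      intro k hk
      obtain rfl : k = N + 1 := by omega
      rw [hPterm]; exact hH
    | succ d ih =>
      intro k hk
      have hkN : k ≤ N := by omega
      have h1 : (P (k + 1)).PosSemidef := ih (k + 1) (by omega)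
      have h1sym : (P (k + 1))ᵀ = P (k + 1) := by
        rw [← Matrix.conjTranspose_eq_transpose_of_trivial]; exact h1.1
      have hBPBp : ((B k)ᵀ * P (k + 1) * B k).PosSemidef := by
        have := h1.conjTranspose_mul_mul_same (B k)
        simpa [Matrix.conjTranspose_eq_transpose_of_trivial] using this
      have hΓp : (R + (B k)ᵀ * P (k + 1) * B k).PosDef := hR.add_posSemidef hBPBp
      have hG's : (R + (B k)ᵀ * P (k + 1) * B k)ᵀ = R + (B k)ᵀ * P (k + 1) * B k := by
        simp [Matrix.transpose_add, Matrix.transpose_mul, hRsym, h1sym, Matrix.mul_assoc]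
      have hWs : ((R + (B k)ᵀ * P (k + 1) * B k)⁻¹)ᵀ = (R + (B k)ᵀ * P (k + 1) * B k)⁻¹ := by
        rw [Matrix.transpose_nonsing_inv, hG's]
      have hGW : (R + (B k)ᵀ * P (k + 1) * B k) * (R + (B k)ᵀ * P (k + 1) * B k)⁻¹ = 1 :=
        Matrix.mul_nonsing_inv _ ((Matrix.isUnit_iff_isUnit_det _).mp hΓp.isUnit)
      have hWG : (R + (B k)ᵀ * P (k + 1) * B k)⁻¹ * (R + (B k)ᵀ * P (k + 1) * B k) = 1 :=
        Matrix.nonsing_inv_mul _ ((Matrix.isUnit_iff_isUnit_det _).mp hΓp.isUnit)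
      refine Matrix.PosSemidef.of_dotProduct_mulVec_nonneg ?_ ?_
      · rw [Matrix.IsHermitian, Matrix.conjTranspose_eq_transpose_of_trivial, hP k hkN]
        simp [Matrix.transpose_sub, Matrix.transpose_add, Matrix.transpose_mul,
          Matrix.transpose_nonsing_inv, hQsym, hRsym, h1sym, Matrix.mul_assoc]
      · intro x
        have hstep := lq_step (A k) (P (k + 1)) Q 1 (B k) R
          (R + (B k)ᵀ * P (k + 1) * B k) ((R + (B k)ᵀ * P (k + 1) * B k)⁻¹)
          h1sym hWs rfl hGW hWG x
          ((-((R + (B k)ᵀ * P (k + 1) * B k)⁻¹ * ((B k)ᵀ * P (k + 1) * A k))) *ᵥ x) 0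
        simp only [Matrix.mulVec_zero, zero_dotProduct, dotProduct_zero, sub_zero,
          sub_self, mul_zero, zero_add, add_zero] at hstep
        rw [star_trivial, hP k hkN, ← hstep]
        have hq1 : ∀ v, (0:ℝ) ≤ v ⬝ᵥ P (k + 1) *ᵥ v := fun v => by
          have := h1.dotProduct_mulVec_nonneg v; rwa [star_trivial] at this
        have hq2 : ∀ v, (0:ℝ) ≤ v ⬝ᵥ Q *ᵥ v := fun v => by
          have := hQ.dotProduct_mulVec_nonneg v; rwa [star_trivial] at this
        have hq3 : ∀ v, (0:ℝ) ≤ v ⬝ᵥ R *ᵥ v := fun v => by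
          have := hR.posSemidef.dotProduct_mulVec_nonneg v; rwa [star_trivial] at this
        exact add_nonneg (add_nonneg (hq1 _) (hq2 _)) (hq3 _)
  have PpsdAll : ∀ k, k ≤ N + 1 → (P k).PosSemidef := fun k hk => Ppsd (N + 1 - k) k (by omega)
  have Psym : ∀ k, k ≤ N + 1 → (P k)ᵀ = P k := by
    intro k hk
    rw [← Matrix.conjTranspose_eq_transpose_of_trivial]; exact (PpsdAll k hk).1
  have Γpd : ∀ k, k ≤ N → (Γ k).PosDef := by
    intro k hk
    rw [hΓ k hk]
    refine hR.add_posSemidef ?_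
    have := (PpsdAll (k + 1) (by omega)).conjTranspose_mul_mul_same (B k)
    simpa [Matrix.conjTranspose_eq_transpose_of_trivial] using this
  have Γsym : ∀ k, k ≤ N → (Γ k)ᵀ = Γ k := by
    intro k hk
    rw [← Matrix.conjTranspose_eq_transpose_of_trivial]; exact (Γpd k hk).1
  have Wsym : ∀ k, k ≤ N → ((Γ k)⁻¹)ᵀ = (Γ k)⁻¹ := by
    intro k hk
    rw [Matrix.transpose_nonsing_inv, Γsym k hk]
  have ΓW : ∀ k, k ≤ N → Γ k * (Γ k)⁻¹ = 1 := fun k hk =>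
    Matrix.mul_nonsing_inv _ ((Matrix.isUnit_iff_isUnit_det _).mp (Γpd k hk).isUnit)
  have WΓ : ∀ k, k ≤ N → (Γ k)⁻¹ * Γ k = 1 := fun k hk =>
    Matrix.nonsing_inv_mul _ ((Matrix.isUnit_iff_isUnit_det _).mp (Γpd k hk).isUnit)
  -- the G matrices
  set Gm : ℕ → Matrix (Fin n) (Fin n) ℝ := fun j =>
    ∑ i ∈ Finset.Icc j N,
      transMat Ac N (i + 1) * (B i * (Γ i)⁻¹ * (B i)ᵀ) * (transMat Ac N (i + 1))ᵀ
    with hGm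
  have Gsplit : ∀ j, j ≤ N → Gm j
      = transMat Ac N (j + 1) * (B j * (Γ j)⁻¹ * (B j)ᵀ) * (transMat Ac N (j + 1))ᵀ
        + Gm (j + 1) := by
    intro j hj
    simp only [hGm]
    have hins : Finset.Icc j N = insert j (Finset.Icc (j + 1) N) := by
      ext i; simp [Finset.mem_Icc, Finset.mem_insert]; omega
    rw [hins, Finset.sum_insert (by simp [Finset.mem_Icc])]
  have Gtop : Gm (N + 1) = 0 := by
    simp only [hGm]
    simp [Finset.Icc_eq_empty_of_lt (by omega : N < N + 1)]
  -- the sum of squares decomposition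
  have decomp : ∀ u, J u = optval
      + ∑ k ∈ Finset.range (N + 1),
          (u k - K k *ᵥ traj A B x0 u k - K₁ k *ᵥ lam)
            ⬝ᵥ Γ k *ᵥ (u k - K k *ᵥ traj A B x0 u k - K₁ k *ᵥ lam) := by
    intro u
    set xtr : ℕ → Fin n → ℝ := traj A B x0 u with hxtr
    set f : ℕ → ℝ := fun j => xtr j ⬝ᵥ P j *ᵥ xtr j
      + 2 * (lam ⬝ᵥ transMat Ac N j *ᵥ xtr j) - lam ⬝ᵥ Gm j *ᵥ lam with hf
    have key : ∀ j ∈ Finset.range (N + 1),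
        xtr j ⬝ᵥ Q *ᵥ xtr j + u j ⬝ᵥ R *ᵥ u j
        = (u j - K j *ᵥ xtr j - K₁ j *ᵥ lam) ⬝ᵥ Γ j *ᵥ (u j - K j *ᵥ xtr j - K₁ j *ᵥ lam)
          - (f (j + 1) - f j) := by
      intro j hj
      have hjN : j ≤ N := by
        have := Finset.mem_range.mp hj; omega
      have hstep := lq_step (A j) (P (j + 1)) Q (transMat Ac N (j + 1)) (B j) R
        (Γ j) ((Γ j)⁻¹) (Psym (j + 1) (by omega)) (Wsym j hjN) (hΓ j hjN)
        (ΓW j hjN) (WΓ j hjN) (xtr j) (u j) lam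
      have hPj : P j = (A j)ᵀ * P (j + 1) * A j + Q
          - (A j)ᵀ * P (j + 1) * B j * (Γ j)⁻¹ * ((B j)ᵀ * P (j + 1) * A j) := by
        rw [hP j hjN, hΓ j hjN]
      rw [← hPj, ← hK j hjN, ← hK₁ j hjN, ← hAc j hjN, ← transMat_of_le Ac hjN] at hstep
      have hx1 : xtr (j + 1) = A j *ᵥ xtr j + B j *ᵥ u j := rfl
      have hGs : lam ⬝ᵥ Gm j *ᵥ lam
          = lam ⬝ᵥ (transMat Ac N (j + 1) * (B j * (Γ j)⁻¹ * (B j)ᵀ)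
              * (transMat Ac N (j + 1))ᵀ) *ᵥ lam + lam ⬝ᵥ Gm (j + 1) *ᵥ lam := by
        rw [Gsplit j hjN, Matrix.add_mulVec, dotProduct_add]
      simp only [hf, hx1]
      linarith [hstep, hGs]
    have hsum : ∑ j ∈ Finset.range (N + 1), (xtr j ⬝ᵥ Q *ᵥ xtr j + u j ⬝ᵥ R *ᵥ u j)
        = (∑ j ∈ Finset.range (N + 1),
            (u j - K j *ᵥ xtr j - K₁ j *ᵥ lam) ⬝ᵥ Γ j *ᵥ
              (u j - K j *ᵥ xtr j - K₁ j *ᵥ lam)) - (f (N + 1) - f 0) := by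
      rw [Finset.sum_congr rfl key, Finset.sum_sub_distrib, Finset.sum_range_sub f]
    have hfN : f (N + 1) = xtr (N + 1) ⬝ᵥ H *ᵥ xtr (N + 1) + 2 * (lam ⬝ᵥ xtr (N + 1)) := by
      simp only [hf]
      simp only [hPterm, transMat_of_gt Ac (by omega : N < N + 1), Gtop,
        Matrix.one_mulVec, Matrix.zero_mulVec, dotProduct_zero, sub_zero]
    have hf0 : f 0 = optval := by
      simp only [hf]
      rw [hoptval]
      have hx0 : xtr 0 = x0 := rfl
      have hflip : lam ⬝ᵥ transMat Ac N 0 *ᵥ x0 = x0 ⬝ᵥ (transMat Ac N 0)ᵀ *ᵥ lam := by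
        rw [dotFlip, dotProduct_comm]
      rw [hx0, hflip]
    rw [hJ u, ← hxtr]
    rw [hsum, hfN]
    linarith [hf0]
  -- trajectory of the optimal control
  have htraj : ∀ k, traj A B x0 ustar k = fbTraj A B K (fun j => K₁ j *ᵥ lam) x0 k := by
    intro k
    induction k with
    | zero => rfl
    | succ k ih =>
      show A k *ᵥ traj A B x0 ustar k + B k *ᵥ ustar k = _
      rw [ih, hustar k]
      rfl
  have hJstar : J ustar = optval := by
    rw [decomp ustar]
    have hz : ∀ k ∈ Finset.range (N + 1),
        (ustar k - K k *ᵥ traj A B x0 ustar k - K₁ k *ᵥ lam) ⬝ᵥ Γ k *ᵥ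
          (ustar k - K k *ᵥ traj A B x0 ustar k - K₁ k *ᵥ lam) = 0 := by
      intro k hk
      have hv : ustar k - K k *ᵥ traj A B x0 ustar k - K₁ k *ᵥ lam = 0 := by
        rw [htraj k, hustar k]; abel
      rw [hv]
      simp
    rw [Finset.sum_eq_zero hz, add_zero]
  have sqnonneg : ∀ u : ℕ → Fin m → ℝ, ∀ k ∈ Finset.range (N + 1),
      0 ≤ (u k - K k *ᵥ traj A B x0 u k - K₁ k *ᵥ lam) ⬝ᵥ Γ k *ᵥ
        (u k - K k *ᵥ traj A B x0 u k - K₁ k *ᵥ lam) := by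
    intro u k hk
    have hkN : k ≤ N := by have := Finset.mem_range.mp hk; omega
    have := (Γpd k hkN).posSemidef.dotProduct_mulVec_nonneg (u k - K k *ᵥ traj A B x0 u k - K₁ k *ᵥ lam)
    rwa [star_trivial] at this
  refine ⟨decomp, ?_, ?_, hJstar⟩
  · intro u
    rw [hJstar, decomp u]
    have := Finset.sum_nonneg (sqnonneg u)
    linarith
  · intro u hu k hk
    rw [decomp u, hJstar] at hu
    have hzero : ∑ k ∈ Finset.range (N + 1),
        (u k - K k *ᵥ traj A B x0 u k - K₁ k *ᵥ lam) ⬝ᵥ Γ k *ᵥ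
          (u k - K k *ᵥ traj A B x0 u k - K₁ k *ᵥ lam) = 0 := by linarith
    have hterm := (Finset.sum_eq_zero_iff_of_nonneg (sqnonneg u)).mp hzero k
      (Finset.mem_range.mpr (by omega))
    have hv : u k - K k *ᵥ traj A B x0 u k - K₁ k *ᵥ lam = 0 := by
      by_contra hne
      have := (Γpd k hk).dotProduct_mulVec_pos hne
      simp only [star_trivial] at this
      linarith
    have := sub_eq_zero.mp (by rwa [sub_sub] at hv)
    rw [this]
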